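/- Let F be a field of characteristic 2, V a finite GF(2)-linear subspace of F, and define s_V(x) = ∏_{c ∈ V} (x - c). Then s_V is a GF(2)-linear map on F, i.e., s_V(u+v) = s_V(u) + s_V(v) for all u, v ∈ F and s_V(λu) = λ s_V(u) for λ ∈ GF(2). -/

import Mathlib

open Polynomial

/-- Translation by an element of `V` permutes the factors. -/
lemma sV_translate {F : Type*} [Field F] (V : AddSubgroup F) [Fintype V] (u : F) (c : V) :
    ∏ d : V, (u + (c : F) - (d : F)) = ∏ d : V, (u - (d : F)) := by
  refine Fintype.prod_equiv (Equiv.subRight c) _ _ (fun d => ?_)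
  simp only [Equiv.subRight_apply]
  push_cast
  ring

/-- Let `F` be a field of characteristic 2, `V` a finite `GF(2)`-linear subspace of `F`
(equivalently, a finite additive subgroup), and `s_V(x) = ∏_{c ∈ V} (x - c)`.
Then `s_V` is a `GF(2)`-linear map on `F`: it is additive, and commutes with
scalar multiplication by elements of `GF(2)`. -/
theorem stmt_3 (F : Type*) [Field F] [CharP F 2] (V : AddSubgroup F) [Fintype V]
    (sV : F → F) (hsV : ∀ x, sV x = ∏ c : V, (x - (c : F))) :
    (∀ u v : F, sV (u + v) = sV u + sV v) ∧
    (∀ (l : ZMod 2) (u : F),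
      sV (ZMod.castHom (dvd_refl 2) F l * u) = ZMod.castHom (dvd_refl 2) F l * sV u) := by
  have hsV0 : sV 0 = 0 := by
    rw [hsV]
    exact Finset.prod_eq_zero (Finset.mem_univ (0 : V)) (by simp)
  constructor
  · intro u v
    set q := Fintype.card V with hq
    have hqpos : 0 < q := Fintype.card_pos
    -- polynomials
    set P : F[X] := ∏ c : V, (X + C u - C (c : F)) with hP
    set Q : F[X] := ∏ c : V, (X - C (c : F)) with hQ
    have hPm : P.Monic := monic_prod_of_monic _ _ (fun c _ => by
      have : X + C u - C (c : F) = X - C ((c : F) - u) := by push_cast; ring_nf; rw [map_sub]; ring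
      rw [this]; exact monic_X_sub_C _)
    have hQm : Q.Monic := monic_prod_of_monic _ _ (fun c _ => monic_X_sub_C _)
    have hPdeg : P.natDegree = q := by
      rw [hP, natDegree_prod _ _ (fun c _ => by
        have : X + C u - C (c : F) = X - C ((c : F) - u) := by rw [map_sub]; ring
        rw [this]; exact (monic_X_sub_C _).ne_zero)]
      simp only [show ∀ c : V, X + C u - C (c : F) = X - C ((c : F) - u) from
        fun c => by rw [map_sub]; ring, natDegree_X_sub_C]
      simp [hq]
    have hQdeg : Q.natDegree = q := by
      rw [hQ, natDegree_prod _ _ (fun c _ => (monic_X_sub_C _).ne_zero)]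
      simp [natDegree_X_sub_C, hq]
    have hPQdeg : (P - Q).degree < (q : ℕ) := by
      rcases eq_or_ne P Q with h | h
      · rw [h, sub_self, degree_zero]; exact WithBot.bot_lt_coe _
      · have hdeq : P.degree = Q.degree := by
          rw [degree_eq_natDegree hPm.ne_zero, degree_eq_natDegree hQm.ne_zero, hPdeg, hQdeg]
        have hlc : P.leadingCoeff = Q.leadingCoeff := by
          rw [hPm.leadingCoeff, hQm.leadingCoeff]
        have := degree_sub_lt hdeq hPm.ne_zero hlc
        rwa [degree_eq_natDegree hPm.ne_zero, hPdeg] at this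
    set R : F[X] := P - Q - C (sV u) with hR
    have hRdeg : R.natDegree < q := by
      have hd : R.degree < (q : ℕ) := by
        refine lt_of_le_of_lt (degree_sub_le _ _) (max_lt hPQdeg ?_)
        exact lt_of_le_of_lt degree_C_le (by exact_mod_cast hqpos)
      rcases eq_or_ne R 0 with h | h
      · simpa [h] using hqpos
      · exact (natDegree_lt_iff_degree_lt h).mpr hd
    -- evaluation facts
    have hPeval : ∀ x : F, P.eval x = sV (u + x) := by
      intro x
      rw [hP, hsV, eval_prod]
      exact Finset.prod_congr rfl (fun c _ => by simp [add_comm x u])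
    have hQeval : ∀ x : F, Q.eval x = sV x := by
      intro x
      rw [hQ, hsV, eval_prod]
      exact Finset.prod_congr rfl (fun c _ => by simp)
    have hRzero : R = 0 := by
      apply eq_zero_of_natDegree_lt_card_of_eval_eq_zero R (Subtype.val_injective (p := (· ∈ V)))
      · intro c
        have h1 : sV (u + (c : F)) = sV u := by
          rw [hsV, hsV]; exact sV_translate V u c
        have h2 : sV (c : F) = 0 := by
          rw [hsV]
          exact Finset.prod_eq_zero (Finset.mem_univ c) (by simp)
        simp [hR, hPeval, hQeval, h1, h2]
      · simpa [hq] using hRdeg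
    have := congrArg (Polynomial.eval v) hRzero
    simp only [hR, eval_sub, eval_C, eval_zero, hPeval, hQeval] at this
    linear_combination this
  · intro l u
    fin_cases l
    · show sV ((ZMod.castHom (dvd_refl 2) F) 0 * u) = (ZMod.castHom (dvd_refl 2) F) 0 * sV u
      simp [hsV0]
    · show sV ((ZMod.castHom (dvd_refl 2) F) 1 * u) = (ZMod.castHom (dvd_refl 2) F) 1 * sV u
      simp
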